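/- arXiv:1405.1170 — 3 statements merged into one kernel-verified Lean document; each statement's English description precedes it below -/
import Mathlib

section
/- Let μ be a probability measure, γ > 0, and let f, g be measurable functions with f ≥ 0, f not μ-a.e. zero, f·max(log f, 0) ∈ L¹(μ), and ∫ exp(γ·g) dμ < ∞. Then ∫ f·g dμ ≤ (1/γ)·∫ f·log(f/∫f dμ) dμ + ((∫ f dμ)/γ)·log(∫ exp(γ·g) dμ), where the left-hand side is interpreted in ℝ ∪ {−∞} (the positive part of f·g is μ-integrable). -/
open MeasureTheory
open scoped ENNReal

/-- Young's inequality `a * b ≤ a log a - a + e^b` for `a ≥ 0`. -/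
lemma young_aux (a b : ℝ) (ha : 0 ≤ a) :
    a * b ≤ a * Real.log a - a + Real.exp b := by
  rcases eq_or_lt_of_le ha with h | h
  · simp [← h, (Real.exp_pos b).le]
  · have h1 := Real.add_one_le_exp (b - Real.log a)
    rw [Real.exp_sub, Real.exp_log h] at h1
    have h2 := mul_le_mul_of_nonneg_left h1 h.le
    have h3 : a * (Real.exp b / a) = Real.exp b := by field_simp
    nlinarith [h2, h3]

/-- Scaled Young inequality used in the entropy inequality. -/
lemma young_scaled (m Z a b : ℝ) (hm : 0 < m) (hZ : 0 < Z) (ha : 0 ≤ a) :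
    a * b - Real.log Z * a ≤ a * Real.log (a / m) - a + m / Z * Real.exp b := by
  rcases eq_or_lt_of_le ha with h | h
  · have : 0 ≤ m / Z * Real.exp b := by positivity
    simp [← h]
    linarith
  · have ham : 0 < a / m := div_pos h hm
    have h1 := Real.add_one_le_exp (b - Real.log Z - Real.log (a / m))
    rw [Real.exp_sub, Real.exp_sub, Real.exp_log hZ, Real.exp_log ham] at h1
    have h2 := mul_le_mul_of_nonneg_left h1 h.le
    have h3 : a * (Real.exp b / Z / (a / m)) = m / Z * Real.exp b := by
      field_simp
    nlinarith [h2, h3]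

/-- The entropic inequality: for a probability measure `μ`, `γ > 0`, `f ≥ 0` measurable,
not a.e. zero, with `f log₊ f ∈ L¹(μ)` and `exp(γ g) ∈ L¹(μ)`, the positive part of `f·g`
is integrable and `μ(fg) ≤ (1/γ) Ent_μ(f) + (μ(f)/γ) log μ(e^{γg})` in `ℝ ∪ {−∞}`. -/
theorem stmt_1 {M : Type*} [MeasurableSpace M] (μ : Measure M) [IsProbabilityMeasure μ]
    (γ : ℝ) (hγ : 0 < γ) (f g : M → ℝ)
    (hfm : Measurable f) (hgm : Measurable g)
    (hf0 : ∀ x, 0 ≤ f x) (hfne : ¬ (f =ᵐ[μ] 0))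
    (hflog : Integrable (fun x => f x * max (Real.log (f x)) 0) μ)
    (hexp : Integrable (fun x => Real.exp (γ * g x)) μ) :
    (∫⁻ x, ENNReal.ofReal (f x * g x) ∂μ < ⊤) ∧
      ((∫⁻ x, ENNReal.ofReal (f x * g x) ∂μ : ℝ≥0∞) : EReal)
          - ((∫⁻ x, ENNReal.ofReal (-(f x * g x)) ∂μ : ℝ≥0∞) : EReal)
        ≤ (((1 / γ) * ∫ x, f x * Real.log (f x / ∫ y, f y ∂μ) ∂μ
            + ((∫ x, f x ∂μ) / γ) * Real.log (∫ x, Real.exp (γ * g x) ∂μ) : ℝ) : EReal) := by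
  set m := ∫ y, f y ∂μ with hm_def
  set Z := ∫ x, Real.exp (γ * g x) ∂μ with hZ_def
  -- integrability of f
  have hf_int : Integrable f μ := by
    refine Integrable.mono' (hflog.add (integrable_const (Real.exp 1)))
      hfm.aestronglyMeasurable (Filter.Eventually.of_forall fun x => ?_)
    rw [Real.norm_eq_abs, abs_of_nonneg (hf0 x)]
    simp only [Pi.add_apply]
    rcases le_or_gt (f x) (Real.exp 1) with h | h
    · have : 0 ≤ f x * max (Real.log (f x)) 0 :=
        mul_nonneg (hf0 x) (le_max_right _ _)
      linarith
    · have hfx : 0 < f x := lt_trans (Real.exp_pos 1) h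
      have hl : 1 ≤ Real.log (f x) := by
        rw [← Real.log_exp 1]
        exact Real.log_le_log (Real.exp_pos 1) h.le
      have : max (Real.log (f x)) 0 = Real.log (f x) :=
        max_eq_left (by linarith)
      rw [this]
      nlinarith [Real.exp_pos 1]
  have hm_pos : 0 < m := by
    rcases lt_or_eq_of_le (integral_nonneg (f := f) hf0) with h | h
    · exact h
    · exact absurd ((integral_eq_zero_iff_of_nonneg hf0 hf_int).mp h.symm) hfne
  have hZ_pos : 0 < Z := integral_exp_pos hexp
  -- integrability of f log f and the entropy integrand
  have hmin_int : Integrable (fun x => f x * min (Real.log (f x)) 0) μ := by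
    refine Integrable.mono' (integrable_const 1)
      ((hfm.mul ((Real.measurable_log.comp hfm).min measurable_const)).aestronglyMeasurable)
      (Filter.Eventually.of_forall fun x => ?_)
    rcases eq_or_lt_of_le (hf0 x) with h | h
    · simp [← h]
    · rcases le_or_gt (f x) 1 with h1 | h1
      · have hl : Real.log (f x) ≤ 0 := Real.log_nonpos h.le h1
        rw [min_eq_left hl, Real.norm_eq_abs, mul_comm]
        exact (Real.abs_log_mul_self_lt (f x) h h1).le
      · have hl : 0 ≤ Real.log (f x) := Real.log_nonneg h1.le
        rw [min_eq_right hl]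
        simp
  have hflogf : Integrable (fun x => f x * Real.log (f x)) μ := by
    have heq : (fun x => f x * Real.log (f x)) =
        fun x => f x * max (Real.log (f x)) 0 + f x * min (Real.log (f x)) 0 := by
      funext x
      rw [← mul_add]
      rw [max_add_min]
      ring
    rw [heq]
    exact hflog.add hmin_int
  have hent_int : Integrable (fun x => f x * Real.log (f x / m)) μ := by
    have heq : (fun x => f x * Real.log (f x / m)) =
        fun x => f x * Real.log (f x) - Real.log m * f x := by
      funext x
      rcases eq_or_lt_of_le (hf0 x) with h | h
      · simp [← h]
      · rw [Real.log_div h.ne' hm_pos.ne']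
        ring
    rw [heq]
    exact hflogf.sub (hf_int.const_mul _)
  -- the positive part of f*g is integrable
  have hpos_meas : Measurable fun x => max (f x * g x) 0 :=
    (hfm.mul hgm).max measurable_const
  have hpos_int : Integrable (fun x => max (f x * g x) 0) μ := by
    refine Integrable.mono' ((hflog.add hexp).const_mul (1 / γ))
      hpos_meas.aestronglyMeasurable (Filter.Eventually.of_forall fun x => ?_)
    have hC : 0 ≤ f x * max (Real.log (f x)) 0 + Real.exp (γ * g x) :=
      add_nonneg (mul_nonneg (hf0 x) (le_max_right _ _)) (Real.exp_pos _).le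
    rw [Real.norm_eq_abs, abs_of_nonneg (le_max_right _ _)]
    refine max_le ?_ (by positivity)
    have hy := young_aux (f x) (γ * g x) (hf0 x)
    have h1 : f x * Real.log (f x) ≤ f x * max (Real.log (f x)) 0 :=
      mul_le_mul_of_nonneg_left (le_max_left _ _) (hf0 x)
    have h2 : γ * (f x * g x) ≤ f x * max (Real.log (f x)) 0 + Real.exp (γ * g x) := by
      nlinarith [hf0 x]
    calc f x * g x = 1 / γ * (γ * (f x * g x)) := by field_simp
      _ ≤ 1 / γ * (f x * max (Real.log (f x)) 0 + Real.exp (γ * g x)) := by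
          exact mul_le_mul_of_nonneg_left h2 (by positivity)
  -- rewrite the two lintegrals via positive parts
  have hposeq : ∫⁻ x, ENNReal.ofReal (f x * g x) ∂μ
      = ∫⁻ x, ENNReal.ofReal (max (f x * g x) 0) ∂μ := by
    refine lintegral_congr fun x => ?_
    rcases le_or_gt 0 (f x * g x) with h | h
    · rw [max_eq_left h]
    · rw [max_eq_right h.le, ENNReal.ofReal_of_nonpos h.le, ENNReal.ofReal_zero]
  have hnegeq : ∫⁻ x, ENNReal.ofReal (-(f x * g x)) ∂μ
      = ∫⁻ x, ENNReal.ofReal (max (-(f x * g x)) 0) ∂μ := by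
    refine lintegral_congr fun x => ?_
    rcases le_or_gt 0 (-(f x * g x)) with h | h
    · rw [max_eq_left h]
    · rw [max_eq_right h.le, ENNReal.ofReal_of_nonpos h.le, ENNReal.ofReal_zero]
  have hposfin : ∫⁻ x, ENNReal.ofReal (f x * g x) ∂μ ≠ ⊤ := by
    rw [hposeq]
    exact (lintegral_ofReal_ne_top_iff_integrable hpos_meas.aestronglyMeasurable
      (Filter.Eventually.of_forall fun x => le_max_right _ _)).mpr hpos_int
  refine ⟨lt_top_iff_ne_top.mpr hposfin, ?_⟩
  by_cases hneg : Integrable (fun x => max (-(f x * g x)) 0) μ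
  · -- f*g is integrable
    have hfg_int : Integrable (fun x => f x * g x) μ := by
      have heq : (fun x => f x * g x) =
          fun x => max (f x * g x) 0 - max (-(f x * g x)) 0 := by
        funext x
        rw [max_zero_sub_max_neg_zero_eq_self]
      rw [heq]
      exact hpos_int.sub hneg
    -- the key real inequality
    have key : ∫ x, f x * g x ∂μ ≤ 1 / γ * ∫ x, f x * Real.log (f x / m) ∂μ
        + m / γ * Real.log Z := by
      have hL_int : Integrable (fun x => γ * (f x * g x) - Real.log Z * f x) μ :=
        (hfg_int.const_mul γ).sub (hf_int.const_mul _)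
      have hR_int : Integrable
          (fun x => f x * Real.log (f x / m) - f x + m / Z * Real.exp (γ * g x)) μ :=
        (hent_int.sub hf_int).add (hexp.const_mul _)
      have hpt : ∀ x, γ * (f x * g x) - Real.log Z * f x
          ≤ f x * Real.log (f x / m) - f x + m / Z * Real.exp (γ * g x) := by
        intro x
        have := young_scaled m Z (f x) (γ * g x) hm_pos hZ_pos (hf0 x)
        nlinarith [this]
      have hI := integral_mono hL_int hR_int hpt
      have hsub : Integrable (fun x => f x * Real.log (f x / m) - f x) μ :=
        hent_int.sub hf_int
      have h3 : Integrable (fun x => m / Z * Real.exp (γ * g x)) μ :=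
        hexp.const_mul _
      have h1 : Integrable (fun x => γ * (f x * g x)) μ := hfg_int.const_mul γ
      have h2 : Integrable (fun x => Real.log Z * f x) μ := hf_int.const_mul _
      rw [integral_sub h1 h2, integral_add hsub h3,
        integral_sub hent_int hf_int, integral_const_mul, integral_const_mul,
        integral_const_mul] at hI
      have hZZ : m / Z * Z = m := div_mul_cancel₀ _ hZ_pos.ne'
      rw [← hZ_def, ← hm_def, hZZ] at hI
      rw [← mul_le_mul_iff_right₀ hγ]
      have hrw : γ * (1 / γ * ∫ x, f x * Real.log (f x / m) ∂μ + m / γ * Real.log Z)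
          = (∫ x, f x * Real.log (f x / m) ∂μ) + m * Real.log Z := by
        field_simp
      rw [hrw]
      linarith
    -- convert to EReal
    have hreal := integral_eq_lintegral_pos_part_sub_lintegral_neg_part hfg_int
    have hnegfin : ∫⁻ x, ENNReal.ofReal (-(f x * g x)) ∂μ ≠ ⊤ := by
      rw [hnegeq]
      exact (lintegral_ofReal_ne_top_iff_integrable
        (((hfm.mul hgm).neg.max measurable_const)).aestronglyMeasurable
        (Filter.Eventually.of_forall fun x => le_max_right _ _)).mpr hneg
    set A := ∫⁻ x, ENNReal.ofReal (f x * g x) ∂μ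
    set B := ∫⁻ x, ENNReal.ofReal (-(f x * g x)) ∂μ
    have hA : (A : EReal) = ((A.toReal : ℝ) : EReal) := by
      rw [← ENNReal.ofReal_toReal hposfin, EReal.coe_ennreal_ofReal,
        max_eq_left ENNReal.toReal_nonneg, ENNReal.toReal_ofReal ENNReal.toReal_nonneg]
    have hB : (B : EReal) = ((B.toReal : ℝ) : EReal) := by
      rw [← ENNReal.ofReal_toReal hnegfin, EReal.coe_ennreal_ofReal,
        max_eq_left ENNReal.toReal_nonneg, ENNReal.toReal_ofReal ENNReal.toReal_nonneg]
    rw [hA, hB, ← EReal.coe_sub]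
    rw [show A.toReal - B.toReal = ∫ x, f x * g x ∂μ from hreal.symm]
    exact_mod_cast key
  · -- negative part not integrable: LHS is ⊥
    have hBtop : ∫⁻ x, ENNReal.ofReal (-(f x * g x)) ∂μ = ⊤ := by
      by_contra h
      rw [hnegeq] at h
      exact hneg ((lintegral_ofReal_ne_top_iff_integrable
        (((hfm.mul hgm).neg.max measurable_const)).aestronglyMeasurable
        (Filter.Eventually.of_forall fun x => le_max_right _ _)).mp h)
    rw [hBtop]
    simp only [EReal.coe_ennreal_top, EReal.sub_top]
    exact bot_le
end

section
/- Let μ be a probability measure and f ≥ 0 measurable with f not μ-a.e. zero. Then the following are equivalent: (i) f ∈ L¹(μ) and f·log(f/μ(f)) ∈ L¹(μ); (ii) f·max(log f, 0) ∈ L¹(μ). -/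
open MeasureTheory

lemma aux_min_bound (t : ℝ) (ht : 0 ≤ t) : |t * min (Real.log t) 0| ≤ 1 := by
  rcases le_or_gt 1 t with h | h
  · rw [min_eq_right (Real.log_nonneg h)]
    simp
  · rcases eq_or_lt_of_le ht with h0 | h0
    · simp [← h0]
    · rw [min_eq_left (Real.log_nonpos ht h.le)]
      have hlog : Real.log t ≤ 0 := Real.log_nonpos ht h.le
      rw [abs_of_nonpos (mul_nonpos_of_nonneg_of_nonpos ht hlog)]
      have hinv : Real.log t⁻¹ ≤ t⁻¹ - 1 :=
        Real.log_le_sub_one_of_pos (inv_pos.mpr h0)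
      rw [Real.log_inv] at hinv
      have := mul_le_mul_of_nonneg_left hinv ht
      have ht' : t * t⁻¹ = 1 := mul_inv_cancel₀ h0.ne'
      nlinarith

/-- For a probability measure `μ` and `f ≥ 0` measurable, not a.e. zero:
`f ∈ L¹(μ)` and `f log(f/μ(f)) ∈ L¹(μ)` iff `f log₊ f ∈ L¹(μ)`. -/
theorem stmt_2 {M : Type*} [MeasurableSpace M] (μ : Measure M) [IsProbabilityMeasure μ]
    (f : M → ℝ) (hfm : Measurable f) (hf0 : ∀ x, 0 ≤ f x) (hfne : ¬ (f =ᵐ[μ] 0)) :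
    (Integrable f μ ∧
        Integrable (fun x => f x * Real.log (f x / ∫ y, f y ∂μ)) μ) ↔
      Integrable (fun x => f x * max (Real.log (f x)) 0) μ := by
  have hc_of : ∀ (_ : Integrable f μ), 0 < ∫ y, f y ∂μ := by
    intro hfi
    rw [integral_pos_iff_support_of_nonneg hf0 hfi]
    rcases eq_or_lt_of_le (zero_le : (0 : ENNReal) ≤ μ (Function.support f)) with h | h
    · exfalso
      apply hfne
      have : ∀ᵐ x ∂μ, x ∉ Function.support f :=
        measure_eq_zero_iff_ae_notMem.mp h.symm
      filter_upwards [this] with x hx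
      exact Function.notMem_support.mp hx
    · exact h
  have hm1 : Measurable fun x => f x * max (Real.log (f x)) 0 :=
    hfm.mul ((Real.measurable_log.comp hfm).max measurable_const)
  have hm2 : Measurable fun x => f x * min (Real.log (f x)) 0 :=
    hfm.mul ((Real.measurable_log.comp hfm).min measurable_const)
  have hmin_int : Integrable (fun x => f x * min (Real.log (f x)) 0) μ := by
    apply Integrable.mono' (integrable_const (1 : ℝ)) hm2.aestronglyMeasurable
    filter_upwards with x
    rw [Real.norm_eq_abs]
    exact aux_min_bound (f x) (hf0 x)
  have key : (fun x => f x * Real.log (f x)) =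
      fun x => f x * max (Real.log (f x)) 0 + f x * min (Real.log (f x)) 0 := by
    funext x
    rw [← mul_add, max_add_min, add_zero]
  have hmax_eq : (fun x => f x * max (Real.log (f x)) 0) =
      fun x => max (f x * Real.log (f x)) 0 := by
    funext x
    rw [mul_max_of_nonneg _ _ (hf0 x), mul_zero]
  constructor
  · rintro ⟨hfi, hflogi⟩
    have hc := hc_of hfi
    have hlogf : Integrable (fun x => f x * Real.log (f x)) μ := by
      have heq : (fun x => f x * Real.log (f x)) =
          fun x => f x * Real.log (f x / ∫ y, f y ∂μ) + f x * Real.log (∫ y, f y ∂μ) := by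
        funext x
        rcases eq_or_ne (f x) 0 with h | h
        · simp [h]
        · rw [Real.log_div h hc.ne', mul_sub]; ring
      rw [heq]
      exact hflogi.add (hfi.mul_const _)
    rw [hmax_eq]
    exact hlogf.pos_part
  · intro h
    have hfi : Integrable f μ := by
      apply Integrable.mono' ((integrable_const (3 : ℝ)).add h) hfm.aestronglyMeasurable
      filter_upwards with x
      simp only [Pi.add_apply]
      rw [Real.norm_eq_abs, abs_of_nonneg (hf0 x)]
      rcases le_or_gt (f x) 3 with h3 | h3
      · have : 0 ≤ f x * max (Real.log (f x)) 0 :=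
          mul_nonneg (hf0 x) (le_max_right _ _)
        linarith
      · have he : Real.exp 1 ≤ f x := by
          have := Real.exp_one_lt_d9
          linarith
        have h1 : (1 : ℝ) ≤ Real.log (f x) := by
          rw [Real.le_log_iff_exp_le (by linarith)]
          exact he
        have hmax : max (Real.log (f x)) 0 = Real.log (f x) :=
          max_eq_left (by linarith)
        rw [hmax]
        nlinarith
    have hlogf : Integrable (fun x => f x * Real.log (f x)) μ := by
      rw [key]
      exact h.add hmin_int
    have hc := hc_of hfi
    refine ⟨hfi, ?_⟩
    have heq : (fun x => f x * Real.log (f x / ∫ y, f y ∂μ)) =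
        fun x => f x * Real.log (f x) - f x * Real.log (∫ y, f y ∂μ) := by
      funext x
      rcases eq_or_ne (f x) 0 with h0 | h0
      · simp [h0]
      · rw [Real.log_div h0 hc.ne', mul_sub]
    rw [heq]
    exact hlogf.sub (hfi.mul_const _)
end

section
/- Let μ be a probability measure, let p₁,…,p_q ≥ r > 0 satisfy 1/p₁ + … + 1/p_q = 1/r, and let α > 0 with α·r ≥ 1. Suppose u₁,…,u_q are measurable functions such that for each i, ∫ exp((γᵢ·|uᵢ|)^{α·pᵢ}) dμ ≤ 2 for some γᵢ > 0. Then ∫ exp((γ₁⋯γ_q·|u₁⋯u_q|)^{α·r}) dμ ≤ 2. -/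
open MeasureTheory
open scoped ENNReal

lemma prod_rpow_const {ι : Type*} (s : Finset ι) (w : ι → ℝ) :
    ∏ i ∈ s, (2 : ℝ≥0∞) ^ w i = (2 : ℝ≥0∞) ^ (∑ i ∈ s, w i) := by
  classical
  induction s using Finset.induction with
  | empty => simp
  | @insert a s ha ih =>
    rw [Finset.prod_insert ha, Finset.sum_insert ha, ih,
      ENNReal.rpow_add _ _ (by norm_num) (by norm_num)]

/-- Lemma on products in exponential Orlicz spaces: if `∫ exp((γᵢ|uᵢ|)^(αpᵢ)) dμ ≤ 2`
for each `i`, with `pᵢ ≥ r > 0`, `∑ 1/pᵢ = 1/r`, `α > 0`, `αr ≥ 1`, then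
`∫ exp((γ₁⋯γ_q |u₁⋯u_q|)^(αr)) dμ ≤ 2`. -/
theorem stmt_3 {M : Type*} [MeasurableSpace M] (μ : Measure M) [IsProbabilityMeasure μ]
    (q : ℕ) (hq : 0 < q) (p : Fin q → ℝ) (r : ℝ) (hr : 0 < r)
    (hp : ∀ i, r ≤ p i) (hsum : ∑ i, 1 / p i = 1 / r)
    (α : ℝ) (hα : 0 < α) (hαr : 1 ≤ α * r)
    (u : Fin q → M → ℝ) (hu : ∀ i, Measurable (u i))
    (γ : Fin q → ℝ) (hγ : ∀ i, 0 < γ i)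
    (hbound : ∀ i, ∫⁻ x, ENNReal.ofReal (Real.exp ((γ i * |u i x|) ^ (α * p i))) ∂μ ≤ 2) :
    ∫⁻ x, ENNReal.ofReal (Real.exp (((∏ i, γ i) * |∏ i, u i x|) ^ (α * r))) ∂μ ≤ 2 := by
  have hpi : ∀ i, 0 < p i := fun i => lt_of_lt_of_le hr (hp i)
  set w : Fin q → ℝ := fun i => r / p i with hw_def
  have hw_nonneg : ∀ i, 0 ≤ w i := fun i => div_nonneg hr.le (hpi i).le
  have hw_sum : ∑ i, w i = 1 := by
    have h : ∑ i, w i = r * ∑ i, 1 / p i := by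
      rw [Finset.mul_sum]
      exact Finset.sum_congr rfl fun i _ => by rw [hw_def]; ring
    rw [h, hsum]
    field_simp
  set f : Fin q → M → ℝ≥0∞ :=
    fun i x => ENNReal.ofReal (Real.exp ((γ i * |u i x|) ^ (α * p i))) with hf_def
  have hf_meas : ∀ i, Measurable (f i) := fun i =>
    ((((hu i).abs.const_mul (γ i)).pow measurable_const).exp).ennreal_ofReal
  -- pointwise inequality
  have hpt : ∀ x, ENNReal.ofReal (Real.exp (((∏ i, γ i) * |∏ i, u i x|) ^ (α * r)))
      ≤ ∏ i, (f i x) ^ w i := by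
    intro x
    set b : Fin q → ℝ := fun i => (γ i * |u i x|) ^ (α * p i) with hb_def
    have hb_nonneg : ∀ i, 0 ≤ b i :=
      fun i => Real.rpow_nonneg (mul_nonneg (hγ i).le (abs_nonneg _)) _
    have key : ((∏ i, γ i) * |∏ i, u i x|) ^ (α * r) ≤ ∑ i, w i * b i := by
      have h1 : ((∏ i, γ i) * |∏ i, u i x|) ^ (α * r) = ∏ i, b i ^ w i := by
        rw [Finset.abs_prod, ← Finset.prod_mul_distrib, ← Real.finset_prod_rpow _ _
          (fun i _ => mul_nonneg (hγ i).le (abs_nonneg _)) _]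
        refine Finset.prod_congr rfl fun i _ => ?_
        rw [hb_def, ← Real.rpow_mul (mul_nonneg (hγ i).le (abs_nonneg _))]
        congr 1
        rw [hw_def]
        rw [mul_assoc, mul_comm (p i), div_mul_cancel₀ r (hpi i).ne']
      rw [h1]
      exact Real.geom_mean_le_arith_mean_weighted _ w b (fun i _ => hw_nonneg i) hw_sum
        (fun i _ => hb_nonneg i)
    have h2 : ∀ i, (f i x) ^ w i = ENNReal.ofReal (Real.exp (w i * b i)) := fun i => by
      rw [hf_def, ENNReal.ofReal_rpow_of_pos (Real.exp_pos _),
        Real.rpow_def_of_pos (Real.exp_pos _), Real.log_exp, mul_comm]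
    calc ENNReal.ofReal (Real.exp (((∏ i, γ i) * |∏ i, u i x|) ^ (α * r)))
        ≤ ENNReal.ofReal (Real.exp (∑ i, w i * b i)) :=
          ENNReal.ofReal_le_ofReal (Real.exp_le_exp.2 key)
      _ = ∏ i, (f i x) ^ w i := by
          simp_rw [h2]
          rw [Real.exp_sum, ← ENNReal.ofReal_prod_of_nonneg (fun i _ => (Real.exp_pos _).le)]
  calc ∫⁻ x, ENNReal.ofReal (Real.exp (((∏ i, γ i) * |∏ i, u i x|) ^ (α * r))) ∂μ
      ≤ ∫⁻ x, ∏ i, (f i x) ^ w i ∂μ := lintegral_mono hpt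
    _ ≤ ∏ i, (∫⁻ x, f i x ∂μ) ^ w i :=
        ENNReal.lintegral_prod_norm_pow_le _ (fun i _ => (hf_meas i).aemeasurable) hw_sum
          (fun i _ => hw_nonneg i)
    _ ≤ ∏ i, (2 : ℝ≥0∞) ^ w i :=
        Finset.prod_le_prod' fun i _ => ENNReal.rpow_le_rpow (hbound i) (hw_nonneg i)
    _ = 2 := by rw [prod_rpow_const, hw_sum, ENNReal.rpow_one]
end
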